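/- Consider the MMAHH with acceptance operators OI and OW on f = OneMax, with p, q ∈ (0,1), and for k, h ∈ [0..n] let p_k^h = Pr[y_{T_s^{(1)}} ≤ h] when the chain is started from an arbitrary x_0 ∈ L_k and s_0 = OI. Then for all h, k ∈ [0..n] one has p_k^h ≥ p_n^0; moreover, for fixed h the quantity p_k^h is non-increasing in k ∈ [0..n], and for fixed k it is non-decreasing in h ∈ [0..n]. -/

import Mathlib

open MeasureTheory
open scoped ENNReal NNReal

namespace MMAHHStmt

/-- The two acceptance operators. -/
inductive Op : Type
  | OI : Op
  | OW : Op
  deriving DecidableEq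

instance : MeasurableSpace Op := ⊤

/-- Search points: bit-strings of length `n`. -/
abbrev Point (n : ℕ) := Fin n → Bool

/-- The number of one-bits of a bit-string. -/
def ones {n : ℕ} (x : Point n) : ℕ := (Finset.univ.filter fun i => x i = true).card

/-- The all-ones string, the global optimum of all benchmarks considered. -/
def optimum (n : ℕ) : Point n := fun _ => true

/-- Flipping the bit in position `v`. -/
def flipBit {n : ℕ} (x : Point n) (v : Fin n) : Point n := Function.update x v (!(x v))

open Classical in
/-- The search point obtained from `x` by proposing to flip bit `v` and applying the
acceptance operator `op` for the objective function `f`. -/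
noncomputable def movedPoint {n : ℕ} (f : Point n → ℝ) (op : Op) (x : Point n) (v : Fin n) :
    Point n :=
  match op with
  | Op.OI => if f x < f (flipBit x v) then flipBit x v else x
  | Op.OW => if f (flipBit x v) < f x then flipBit x v else x

open Classical in
/-- One-step transition probability of the search point under acceptance operator `op`:
a uniformly random bit is flipped and the move is accepted or rejected according to `op`. -/
noncomputable def moveProb {n : ℕ} (f : Point n → ℝ) (op : Op) (x x' : Point n) : ℝ≥0∞ :=
  ((Finset.univ.filter fun v => movedPoint f op x v = x').card : ℝ≥0∞) / n

/-- Transition probabilities of the two-state Markov chain on the acceptance operators. -/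
noncomputable def switchProb (p q : ℝ) : Op → Op → ℝ≥0∞
  | Op.OI, Op.OI => ENNReal.ofReal (1 - p)
  | Op.OI, Op.OW => ENNReal.ofReal p
  | Op.OW, Op.OI => ENNReal.ofReal q
  | Op.OW, Op.OW => ENNReal.ofReal (1 - q)

/-- One-step transition probabilities of the MMAHH on the state space
`Point n × Op`: the search point moves according to the current acceptance operator, and,
independently, the operator switches according to the two-state Markov chain. -/
noncomputable def mmahhTrans {n : ℕ} (f : Point n → ℝ) (p q : ℝ) :
    Point n × Op → Point n × Op → ℝ≥0∞ :=
  fun s s' => moveProb f s.2 s.1 s'.1 * switchProb p q s.2 s'.2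

/-- `X` is (a version of) the MMAHH Markov chain with objective function `f` and switching
probabilities `p` and `q`, under the measure `μ`: each `X t` is measurable, and conditionally
on any history, the next state is distributed according to `mmahhTrans`. -/
def IsMMAHH {n : ℕ} {Ω : Type*} [MeasurableSpace Ω] (μ : Measure Ω)
    (X : ℕ → Ω → Point n × Op) (f : Point n → ℝ) (p q : ℝ) : Prop :=
  (∀ t, Measurable (X t)) ∧
  ∀ (t : ℕ) (σ : ℕ → Point n × Op) (s' : Point n × Op),
    μ {ω | (∀ i ≤ t, X i ω = σ i) ∧ X (t + 1) ω = s'}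
      = μ {ω | ∀ i ≤ t, X i ω = σ i} * mmahhTrans f p q (σ t) s'

/-- The runtime: the first hitting time of the global optimum, as an extended natural number
(`⊤` if the optimum is never reached). -/
noncomputable def hitTime {n : ℕ} {Ω : Type*} (X : ℕ → Ω → Point n × Op) (ω : Ω) : ℕ∞ :=
  ⨅ t ∈ {t : ℕ | (X t ω).1 = optimum n}, (t : ℕ∞)

/-- The `k`-th switching time between the two acceptance operators (with junk value given by
`Nat.sInf ∅ = 0` on the probability-zero event that no further switch occurs). -/
noncomputable def switchTime {n : ℕ} {Ω : Type*} (X : ℕ → Ω → Point n × Op) : ℕ → Ω → ℕ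
  | 0, _ => 0
  | k + 1, ω =>
      sInf {t : ℕ | switchTime X k ω ≤ t ∧ (X t ω).2 ≠ (X (switchTime X k ω) ω).2}

/-- The OneMax benchmark. -/
noncomputable def OneMax (n : ℕ) (x : Point n) : ℝ := (ones x : ℝ)

-- ===== auxiliary development =====


-- zeros
open Classical in
noncomputable def zeros {n : ℕ} (x : Point n) : Finset (Fin n) :=
  Finset.univ.filter fun i => x i = false

noncomputable def zc {n : ℕ} (x : Point n) : ℕ := (zeros x).card

lemma ones_add_zc {n : ℕ} (x : Point n) : ones x + zc x = n := by
  classical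
  have := Finset.card_filter_add_card_filter_not
    (s := (Finset.univ : Finset (Fin n))) (p := fun i => x i = true)
  simp only [Finset.card_univ, Fintype.card_fin] at this
  have h2 : (Finset.univ.filter fun a => ¬ x a = true) = (Finset.univ.filter fun i => x i = false) := by
    apply Finset.filter_congr; intro i _; simp
  rw [ones, zc, zeros, ← h2]
  exact this

lemma zc_eq {n : ℕ} (x : Point n) : n - ones x = zc x := by
  have := ones_add_zc x; omega

lemma ones_le {n : ℕ} (x : Point n) : ones x ≤ n := by have := ones_add_zc x; omega

lemma zc_le {n : ℕ} (x : Point n) : zc x ≤ n := by have := ones_add_zc x; omega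

lemma flipBit_apply {n : ℕ} (x : Point n) (v i : Fin n) :
    flipBit x v i = if i = v then !(x v) else x i := by
  simp [flipBit, Function.update_apply]

lemma ones_flipBit_false {n : ℕ} (x : Point n) (v : Fin n) (hv : x v = false) :
    ones (flipBit x v) = ones x + 1 := by
  classical
  rw [ones, ones]
  have : (Finset.univ.filter fun i => flipBit x v i = true)
      = insert v (Finset.univ.filter fun i => x i = true) := by
    ext i
    by_cases hiv : i = v <;> simp [flipBit_apply, hiv, hv]
  rw [this, Finset.card_insert_of_notMem (by simp [hv])]

lemma ones_flipBit_true {n : ℕ} (x : Point n) (v : Fin n) (hv : x v = true) :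
    ones (flipBit x v) = ones x - 1 ∧ 1 ≤ ones x := by
  classical
  have hvmem : v ∈ Finset.univ.filter fun i => x i = true := by simp [hv]
  have : (Finset.univ.filter fun i => flipBit x v i = true)
      = (Finset.univ.filter fun i => x i = true).erase v := by
    ext i
    by_cases hiv : i = v <;> simp [flipBit_apply, hiv, hv]
  constructor
  · rw [ones, ones, this, Finset.card_erase_of_mem hvmem]
  · exact Finset.card_pos.mpr ⟨v, hvmem⟩ |>.le.trans (le_refl _) |> fun h => Finset.card_pos.mpr ⟨v, hvmem⟩

lemma movedPoint_OI {n : ℕ} (x : Point n) (v : Fin n) :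
    movedPoint (OneMax n) Op.OI x v = fun i => x i || decide (i = v) := by
  classical
  funext i
  rw [movedPoint]
  by_cases hv : x v = true
  · obtain ⟨h1, h2⟩ := ones_flipBit_true x v hv
    have : ¬ (OneMax n x < OneMax n (flipBit x v)) := by
      simp only [OneMax, h1, not_lt]
      exact_mod_cast Nat.sub_le _ _
    rw [if_neg this]
    by_cases hiv : i = v <;> simp [hiv, hv]
  · have hv' : x v = false := by simpa using hv
    have : OneMax n x < OneMax n (flipBit x v) := by
      simp only [OneMax, ones_flipBit_false x v hv']
      exact_mod_cast Nat.lt_succ_self _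
    rw [if_pos this]
    by_cases hiv : i = v <;> simp [flipBit_apply, hiv, hv']

lemma zeros_moved {n : ℕ} (x : Point n) (v : Fin n) :
    zeros (movedPoint (OneMax n) Op.OI x v) = (zeros x).erase v := by
  classical
  ext i
  simp [zeros, movedPoint_OI, Finset.mem_erase, and_comm]

lemma zc_moved_false {n : ℕ} (x : Point n) (v : Fin n) (hv : x v = false) :
    zc (movedPoint (OneMax n) Op.OI x v) = zc x - 1 := by
  rw [zc, zeros_moved, Finset.card_erase_of_mem (by simp [zeros, hv])]
  rfl

lemma zc_moved_true {n : ℕ} (x : Point n) (v : Fin n) (hv : x v = true) :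
    zc (movedPoint (OneMax n) Op.OI x v) = zc x := by
  rw [zc, zeros_moved, Finset.erase_eq_of_notMem (by simp [zeros, hv])]
  rfl

/-- Given finsets of equal cardinality, there is a permutation matching them. -/
lemma exists_perm_iff {α : Type*} [Fintype α] [DecidableEq α] (A B : Finset α)
    (h : A.card = B.card) : ∃ π : Equiv.Perm α, ∀ i, i ∈ A ↔ π i ∈ B := by
  classical
  have hc : Aᶜ.card = Bᶜ.card := by
    rw [Finset.card_compl, Finset.card_compl, h]
  let e1 : (A : Finset α) ≃ (B : Finset α) := Finset.equivOfCardEq h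
  let e2 : (Aᶜ : Finset α) ≃ (Bᶜ : Finset α) := Finset.equivOfCardEq hc
  let eA : {x // x ∈ A} ⊕ {x // x ∉ A} ≃ α := Equiv.sumCompl (fun x => x ∈ A)
  let eB : {x // x ∈ B} ⊕ {x // x ∉ B} ≃ α := Equiv.sumCompl (fun x => x ∈ B)
  let cA : {x // x ∉ A} ≃ {x // x ∈ Aᶜ} := Equiv.subtypeEquivRight (by intro x; simp)
  let cB : {x // x ∈ Bᶜ} ≃ {x // x ∉ B} := Equiv.subtypeEquivRight (by intro x; simp)
  let π : Equiv.Perm α :=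
    (eA.symm.trans (Equiv.sumCongr e1 (cA.trans (e2.trans cB)))).trans eB
  refine ⟨π, fun i => ?_⟩
  constructor
  · intro hi
    have : π i = (e1 ⟨i, hi⟩ : α) := by
      simp only [π, Equiv.trans_apply]
      rw [show eA.symm i = Sum.inl ⟨i, hi⟩ from by
        simp [eA, Equiv.sumCompl_symm_apply_of_pos hi]]
      simp [eB]
    rw [this]
    exact (e1 ⟨i, hi⟩).2
  · intro hB
    by_contra hi
    have : π i = ((cB (e2 (cA ⟨i, hi⟩))) : α) := by
      simp only [π, Equiv.trans_apply]
      rw [show eA.symm i = Sum.inr ⟨i, hi⟩ from by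
        simp [eA, Equiv.sumCompl_symm_apply_of_neg hi]]
      simp [eB]
    rw [this] at hB
    exact (cB (e2 (cA ⟨i, hi⟩))).2 hB

lemma exists_perm_maps {α : Type*} [Fintype α] [DecidableEq α] (A B : Finset α)
    (h : A.card ≤ B.card) :
    ∃ π : Equiv.Perm α, (∀ i ∈ A, π i ∈ B) ∧ (A.card = B.card → ∀ i, i ∈ A ↔ π i ∈ B) := by
  classical
  obtain ⟨B', hB'B, hB'⟩ := Finset.exists_subset_card_eq h
  obtain ⟨π, hπ⟩ := exists_perm_iff A B' hB'.symm
  refine ⟨π, fun i hi => hB'B ((hπ i).mp hi), fun hcard i => ?_⟩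
  have : B' = B := Finset.eq_of_subset_of_card_le hB'B (by omega)
  rw [← this]; exact hπ i

/-- Success probability of reaching `zc ≤ h` after exactly `t` OI-steps from `x`. -/
noncomputable def G (n h : ℕ) : ℕ → Point n → ℝ≥0∞
  | 0, x => if zc x ≤ h then 1 else 0
  | (t+1), x => (∑ v : Fin n, G n h t (movedPoint (OneMax n) Op.OI x v)) / n

lemma G_le_one {n h : ℕ} (hn : n ≠ 0) : ∀ (t : ℕ) (x : Point n), G n h t x ≤ 1 := by
  intro t
  induction t with
  | zero => intro x; rw [G]; split <;> simp
  | succ t ih =>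
    intro x
    rw [G]
    calc (∑ v : Fin n, G n h t (movedPoint (OneMax n) Op.OI x v)) / n
        ≤ (∑ _v : Fin n, (1:ℝ≥0∞)) / n := by
          apply ENNReal.div_le_div_right
          exact Finset.sum_le_sum fun v _ => ih _
      _ = 1 := by
          simp only [Finset.sum_const, Finset.card_univ, Fintype.card_fin, nsmul_eq_mul, mul_one]
          exact ENNReal.div_self (by exact_mod_cast hn) (by simp)

lemma G_full {n : ℕ} (hn : n ≠ 0) : ∀ (t : ℕ) (x : Point n), G n n t x = 1 := by
  intro t
  induction t with
  | zero => intro x; rw [G, if_pos (zc_le x)]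
  | succ t ih =>
    intro x
    rw [G]
    simp only [ih]
    simp only [Finset.sum_const, Finset.card_univ, Fintype.card_fin, nsmul_eq_mul, mul_one]
    exact ENNReal.div_self (by exact_mod_cast hn) (by simp)

lemma G_mono {n : ℕ} : ∀ (t h h' : ℕ) (x x' : Point n), h' ≤ h → zc x ≤ zc x' →
    G n h' t x' ≤ G n h t x := by
  intro t
  induction t with
  | zero =>
    intro h h' x x' hh hz
    rw [G, G]
    by_cases hx' : zc x' ≤ h'
    · rw [if_pos hx', if_pos (le_trans hz (le_trans hx' hh))]
    · rw [if_neg hx']; exact zero_le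
  | succ t ih =>
    intro h h' x x' hh hz
    obtain ⟨π, hπ1, hπ2⟩ := exists_perm_maps (zeros x) (zeros x') hz
    rw [G, G]
    apply ENNReal.div_le_div_right
    have hre : ∑ v : Fin n, G n h' t (movedPoint (OneMax n) Op.OI x' v)
        = ∑ v : Fin n, G n h' t (movedPoint (OneMax n) Op.OI x' (π v)) :=
      (Equiv.sum_comp π (fun v => G n h' t (movedPoint (OneMax n) Op.OI x' v))).symm
    rw [hre]
    apply Finset.sum_le_sum
    intro v _
    apply ih _ _ _ _ hh
    by_cases hv : x v = false
    · have hπv : x' (π v) = false := by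
        have := hπ1 v (by simp [zeros, hv])
        simpa [zeros] using this
      rw [zc_moved_false x v hv, zc_moved_false x' (π v) hπv]
      omega
    · have hv' : x v = true := by simpa using hv
      rw [zc_moved_true x v hv']
      rcases lt_or_eq_of_le hz with hlt | heq
      · by_cases hπv : x' (π v) = false
        · rw [zc_moved_false x' (π v) hπv]; omega
        · rw [zc_moved_true x' (π v) (by simpa using hπv)]; omega
      · have hπv : x' (π v) = true := by
          have := (hπ2 heq v)
          by_contra hcon
          have hf : x' (π v) = false := by simpa using hcon
          have : v ∈ zeros x := this.mpr (by simp [zeros, hf])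
          simp [zeros, hv'] at this
        rw [zc_moved_true x' (π v) hπv]
        omega

instance : Fintype Op := ⟨{Op.OI, Op.OW}, fun x => by cases x <;> simp⟩
instance : MeasurableSingletonClass Op := ⟨fun _ => trivial⟩

lemma measurableSet_discrete {n : ℕ} (A : Set (Point n × Op)) : MeasurableSet A := by
  rw [← Set.biUnion_of_singleton A]
  exact MeasurableSet.biUnion A.to_countable (fun b _ => MeasurableSet.singleton b)

lemma measurableSet_X {n : ℕ} {Ω : Type*} [MeasurableSpace Ω] {X : ℕ → Ω → Point n × Op}
    (hX : ∀ t, Measurable (X t)) (t : ℕ) (A : Set (Point n × Op)) :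
    MeasurableSet {ω | X t ω ∈ A} := (hX t) (measurableSet_discrete A)

section MeasureLayer

variable {n : ℕ} {Ω : Type*} [MeasurableSpace Ω]

/-- Event: the operator is `OI` through time `t` and the search point at time `t` is `x`. -/
def mEvent (X : ℕ → Ω → Point n × Op) (t : ℕ) (x : Point n) : Set Ω :=
  {ω | (∀ i ≤ t, (X i ω).2 = Op.OI) ∧ (X t ω).1 = x}

noncomputable def mVec (μ : Measure Ω) (X : ℕ → Ω → Point n × Op) (t : ℕ) (x : Point n) :
    ℝ≥0∞ := μ (mEvent X t x)

lemma measurableSet_mEvent {X : ℕ → Ω → Point n × Op} (hX : ∀ t, Measurable (X t))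
    (t : ℕ) (x : Point n) : MeasurableSet (mEvent X t x) := by
  have hev : mEvent X t x
      = (⋂ i ∈ Set.Iic t, X i ⁻¹' {s | s.2 = Op.OI}) ∩ X t ⁻¹' {s | s.1 = x} := by
    ext ω
    simp [mEvent, Set.mem_iInter]
  rw [hev]
  exact (MeasurableSet.biInter (Set.to_countable _)
    (fun i _ => (hX i) (measurableSet_discrete _))).inter ((hX t) (measurableSet_discrete _))

/-- Extension of a finite path of points to an `ℕ`-indexed path of states with operator OI. -/
def extPath (t : ℕ) (ρ : Fin (t+1) → Point n) : ℕ → Point n × Op :=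
  fun i => (ρ ⟨min i t, Nat.lt_succ_of_le (min_le_right i t)⟩, Op.OI)

lemma extPath_le {t : ℕ} (ρ : Fin (t+1) → Point n) {i : ℕ} (hi : i ≤ t) :
    extPath t ρ i = (ρ ⟨i, Nat.lt_succ_of_le hi⟩, Op.OI) := by
  have : (⟨min i t, Nat.lt_succ_of_le (min_le_right i t)⟩ : Fin (t+1))
      = ⟨i, Nat.lt_succ_of_le hi⟩ := Fin.ext (min_eq_left hi)
  rw [extPath, this]

def cyl (X : ℕ → Ω → Point n × Op) (t : ℕ) (ρ : Fin (t+1) → Point n) : Set Ω :=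
  {ω | ∀ i ≤ t, X i ω = extPath t ρ i}

lemma measurableSet_cyl {X : ℕ → Ω → Point n × Op} (hX : ∀ t, Measurable (X t))
    (t : ℕ) (ρ : Fin (t+1) → Point n) : MeasurableSet (cyl X t ρ) := by
  have hev : cyl X t ρ = ⋂ i ∈ Set.Iic t, X i ⁻¹' {extPath t ρ i} := by
    ext ω; simp [cyl, Set.mem_iInter]
  rw [hev]
  exact MeasurableSet.biInter (Set.to_countable _)
    (fun i _ => (hX i) (measurableSet_discrete _))

lemma cyl_pairwise_disjoint (X : ℕ → Ω → Point n × Op) (t : ℕ)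
    {ρ ρ' : Fin (t+1) → Point n} (hne : ρ ≠ ρ') : Disjoint (cyl X t ρ) (cyl X t ρ') := by
  rw [Set.disjoint_left]
  intro ω hω hω'
  apply hne
  funext j
  have h1 := hω j.val (Nat.lt_succ_iff.mp j.isLt)
  have h2 := hω' j.val (Nat.lt_succ_iff.mp j.isLt)
  rw [extPath_le ρ (Nat.lt_succ_iff.mp j.isLt)] at h1
  rw [extPath_le ρ' (Nat.lt_succ_iff.mp j.isLt)] at h2
  have hj : (⟨j.val, Nat.lt_succ_of_le (Nat.lt_succ_iff.mp j.isLt)⟩ : Fin (t+1)) = j :=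
    Fin.ext rfl
  rw [hj] at h1 h2
  have := h1.symm.trans h2
  exact congrArg Prod.fst this

lemma mEvent_eq_biUnion (X : ℕ → Ω → Point n × Op) (t : ℕ) (x : Point n) :
    mEvent X t x = ⋃ ρ ∈ Finset.univ.filter
      (fun ρ : Fin (t+1) → Point n => ρ (Fin.last t) = x), cyl X t ρ := by
  classical
  ext ω
  simp only [Set.mem_iUnion, Finset.mem_coe, Finset.mem_filter, Finset.mem_univ, true_and,
    mEvent, Set.mem_setOf_eq, exists_prop]
  constructor
  · rintro ⟨hop, hx⟩
    refine ⟨fun j => (X (j : ℕ) ω).1, ?_, ?_⟩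
    · exact hx
    · intro i hi
      rw [extPath_le _ hi]
      exact Prod.ext rfl (hop i hi)
  · rintro ⟨ρ, hρ, hcyl⟩
    constructor
    · intro i hi
      rw [hcyl i hi, extPath_le _ hi]
    · have h1 := hcyl t le_rfl
      rw [extPath_le _ le_rfl] at h1
      rw [h1]
      exact hρ

lemma step_eq {p q : ℝ} {μ : Measure Ω} {X : ℕ → Ω → Point n × Op}
    (hchain : IsMMAHH μ X (OneMax n) p q) (t : ℕ) (x : Point n) (s' : Point n × Op) :
    μ (mEvent X t x ∩ {ω | X (t+1) ω = s'})
      = mVec μ X t x * mmahhTrans (OneMax n) p q (x, Op.OI) s' := by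
  classical
  set F := Finset.univ.filter (fun ρ : Fin (t+1) → Point n => ρ (Fin.last t) = x) with hF
  have hdisj : (↑F : Set (Fin (t+1) → Point n)).PairwiseDisjoint (cyl X t) :=
    fun ρ _ ρ' _ hne => cyl_pairwise_disjoint X t hne
  have hdisj2 : (↑F : Set (Fin (t+1) → Point n)).PairwiseDisjoint
      (fun ρ => cyl X t ρ ∩ {ω | X (t+1) ω = s'}) :=
    fun ρ hρ ρ' hρ' hne => Disjoint.mono Set.inter_subset_left Set.inter_subset_left
      (hdisj hρ hρ' hne)
  have hmeas1 : ∀ ρ ∈ F, MeasurableSet (cyl X t ρ) :=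
    fun ρ _ => measurableSet_cyl hchain.1 t ρ
  have hmeas2 : ∀ ρ ∈ F, MeasurableSet (cyl X t ρ ∩ {ω | X (t+1) ω = s'}) :=
    fun ρ hρ => (hmeas1 ρ hρ).inter (measurableSet_X hchain.1 (t+1) {z | z = s'})
  have hsets : mEvent X t x ∩ {ω | X (t+1) ω = s'}
      = ⋃ ρ ∈ F, (cyl X t ρ ∩ {ω | X (t+1) ω = s'}) := by
    rw [mEvent_eq_biUnion X t x, Set.iUnion₂_inter]
  rw [hsets, measure_biUnion_finset hdisj2 hmeas2, mVec, mEvent_eq_biUnion X t x,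
    measure_biUnion_finset hdisj hmeas1, Finset.sum_mul]
  apply Finset.sum_congr rfl
  intro ρ hρ
  have hform : cyl X t ρ ∩ {ω | X (t+1) ω = s'}
      = {ω | (∀ i ≤ t, X i ω = extPath t ρ i) ∧ X (t + 1) ω = s'} := rfl
  have hlast : extPath t ρ t = (x, Op.OI) := by
    rw [extPath_le _ le_rfl]
    have : (⟨t, Nat.lt_succ_of_le le_rfl⟩ : Fin (t+1)) = Fin.last t := Fin.ext rfl
    rw [this]
    have hx : ρ (Fin.last t) = x := by
      rw [hF] at hρ
      simpa using hρ
    rw [hx]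
  have := hchain.2 t (extPath t ρ) s'
  rw [hlast] at this
  rw [hform, this]
  rfl

lemma mVec_zero {μ : Measure Ω} {X : ℕ → Ω → Point n × Op} {x0 : Point n}
    (hprob : IsProbabilityMeasure μ) (hX : ∀ t, Measurable (X t))
    (hinit : μ {ω | X 0 ω = (x0, Op.OI)} = 1) (x : Point n) :
    mVec μ X 0 x = if x = x0 then 1 else 0 := by
  have hev : mEvent X 0 x = {ω | X 0 ω = (x, Op.OI)} := by
    ext ω
    constructor
    · rintro ⟨hop, hx⟩
      exact Prod.ext hx (hop 0 le_rfl)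
    · intro hx
      exact ⟨fun i hi => by rw [Nat.le_zero.mp hi, hx], by rw [hx]⟩
  rw [mVec, hev]
  split_ifs with hxx
  · rw [hxx]; exact hinit
  · have hΓ : MeasurableSet {ω | X 0 ω = (x0, Op.OI)} := measurableSet_X hX 0 {z | z = (x0, Op.OI)}
    have hc : μ {ω | X 0 ω = (x0, Op.OI)}ᶜ = 0 := by
      rw [measure_compl hΓ (measure_ne_top μ _), hinit, measure_univ]
      simp
    refine le_antisymm (le_trans (measure_mono ?_) hc.le) zero_le
    intro ω hω hcon
    apply hxx
    have : (x, Op.OI) = ((x0 : Point n), Op.OI) := by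
      rw [← hω, hcon]
    exact congrArg Prod.fst this

lemma mVec_succ {p q : ℝ} {μ : Measure Ω} {X : ℕ → Ω → Point n × Op}
    (hchain : IsMMAHH μ X (OneMax n) p q) (t : ℕ) (x' : Point n) :
    mVec μ X (t+1) x'
      = ∑ x : Point n, mVec μ X t x * mmahhTrans (OneMax n) p q (x, Op.OI) (x', Op.OI) := by
  classical
  have hev : mEvent X (t+1) x'
      = ⋃ x : Point n, (mEvent X t x ∩ {ω | X (t+1) ω = (x', Op.OI)}) := by
    ext ω
    simp only [mEvent, Set.mem_setOf_eq, Set.mem_iUnion, Set.mem_inter_iff]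
    constructor
    · rintro ⟨hop, hx⟩
      exact ⟨(X t ω).1, ⟨⟨fun i hi => hop i (le_trans hi (Nat.le_succ t)), rfl⟩,
        Prod.ext hx (hop (t+1) le_rfl)⟩⟩
    · rintro ⟨x, ⟨⟨hop, _⟩, hnext⟩⟩
      refine ⟨fun i hi => ?_, by rw [hnext]⟩
      by_cases hit : i ≤ t
      · exact hop i hit
      · have hieq : i = t + 1 := by omega
        rw [hieq, hnext]
  have hdisjU : Pairwise (Function.onFun Disjoint
      fun x : Point n => mEvent X t x ∩ {ω | X (t+1) ω = (x', Op.OI)}) := by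
    intro a b hab
    rw [Function.onFun, Set.disjoint_left]
    rintro ω ⟨⟨_, ha⟩, _⟩ ⟨⟨_, hb⟩, _⟩
    exact hab (ha ▸ hb ▸ rfl)
  have hmeasU : ∀ x : Point n,
      MeasurableSet (mEvent X t x ∩ {ω | X (t+1) ω = (x', Op.OI)}) :=
    fun x => (measurableSet_mEvent hchain.1 t x).inter
      (measurableSet_X hchain.1 (t+1) {z | z = (x', Op.OI)})
  rw [mVec, hev, measure_iUnion hdisjU hmeasU, tsum_fintype]
  exact Finset.sum_congr rfl fun x _ => step_eq hchain t x (x', Op.OI)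

lemma aVec {p q : ℝ} {μ : Measure Ω} {X : ℕ → Ω → Point n × Op}
    (hchain : IsMMAHH μ X (OneMax n) p q) (t : ℕ) (x' : Point n) :
    μ {ω | (∀ i ≤ t, (X i ω).2 = Op.OI) ∧ X (t+1) ω = (x', Op.OW)}
      = ∑ x : Point n, mVec μ X t x * mmahhTrans (OneMax n) p q (x, Op.OI) (x', Op.OW) := by
  classical
  have hev : {ω | (∀ i ≤ t, (X i ω).2 = Op.OI) ∧ X (t+1) ω = (x', Op.OW)}
      = ⋃ x : Point n, (mEvent X t x ∩ {ω | X (t+1) ω = (x', Op.OW)}) := by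
    ext ω
    simp only [mEvent, Set.mem_setOf_eq, Set.mem_iUnion, Set.mem_inter_iff]
    constructor
    · rintro ⟨hop, hx⟩
      exact ⟨(X t ω).1, ⟨⟨hop, rfl⟩, hx⟩⟩
    · rintro ⟨x, ⟨⟨hop, _⟩, hnext⟩⟩
      exact ⟨hop, hnext⟩
  have hdisjU : Pairwise (Function.onFun Disjoint
      fun x : Point n => mEvent X t x ∩ {ω | X (t+1) ω = (x', Op.OW)}) := by
    intro a b hab
    rw [Function.onFun, Set.disjoint_left]
    rintro ω ⟨⟨_, ha⟩, _⟩ ⟨⟨_, hb⟩, _⟩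
    exact hab (ha ▸ hb ▸ rfl)
  have hmeasU : ∀ x : Point n,
      MeasurableSet (mEvent X t x ∩ {ω | X (t+1) ω = (x', Op.OW)}) :=
    fun x => (measurableSet_mEvent hchain.1 t x).inter
      (measurableSet_X hchain.1 (t+1) {z | z = (x', Op.OW)})
  rw [hev, measure_iUnion hdisjU hmeasU, tsum_fintype]
  exact Finset.sum_congr rfl fun x _ => step_eq hchain t x (x', Op.OW)

end MeasureLayer

lemma trans_OI {n : ℕ} (p q : ℝ) (x x' : Point n) :
    mmahhTrans (OneMax n) p q (x, Op.OI) (x', Op.OI)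
      = moveProb (OneMax n) Op.OI x x' * ENNReal.ofReal (1-p) := rfl

lemma trans_OW {n : ℕ} (p q : ℝ) (x x' : Point n) :
    mmahhTrans (OneMax n) p q (x, Op.OI) (x', Op.OW)
      = moveProb (OneMax n) Op.OI x x' * ENNReal.ofReal p := rfl

lemma sum_moveProb_mul {n : ℕ} (x : Point n) (g : Point n → ℝ≥0∞) :
    ∑ x' : Point n, moveProb (OneMax n) Op.OI x x' * g x'
      = (∑ v : Fin n, g (movedPoint (OneMax n) Op.OI x v)) / n := by
  classical
  have h1 : ∀ x' : Point n, moveProb (OneMax n) Op.OI x x' * g x'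
      = (∑ v : Fin n, if movedPoint (OneMax n) Op.OI x v = x' then g x' else 0) * (n:ℝ≥0∞)⁻¹ := by
    intro x'
    rw [moveProb, div_eq_mul_inv, mul_right_comm]
    congr 1
    rw [← Finset.sum_filter, Finset.sum_const, nsmul_eq_mul]
  rw [div_eq_mul_inv]
  simp only [h1]
  rw [← Finset.sum_mul]
  congr 1
  rw [Finset.sum_comm]
  apply Finset.sum_congr rfl
  intro v _
  rw [Finset.sum_ite_eq Finset.univ (movedPoint (OneMax n) Op.OI x v) g,
    if_pos (Finset.mem_univ _)]

lemma G_succ {n h : ℕ} (r : ℕ) (x : Point n) :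
    G n h (r+1) x = (∑ v : Fin n, G n h r (movedPoint (OneMax n) Op.OI x v)) / n := by
  rw [G]

lemma mVec_G {n : ℕ} {p q : ℝ} {Ω : Type*} [MeasurableSpace Ω]
    {μ : Measure Ω} {X : ℕ → Ω → Point n × Op} {x0 : Point n}
    (hprob : IsProbabilityMeasure μ) (hchain : IsMMAHH μ X (OneMax n) p q)
    (hinit : μ {ω | X 0 ω = (x0, Op.OI)} = 1) (h : ℕ) :
    ∀ t r : ℕ, ∑ x : Point n, mVec μ X t x * G n h r x
      = ENNReal.ofReal (1-p) ^ t * G n h (t+r) x0 := by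
  classical
  intro t
  induction t with
  | zero =>
    intro r
    simp only [mVec_zero hprob hchain.1 hinit]
    rw [pow_zero, one_mul, Nat.zero_add]
    have hterm : ∀ x : Point n, (if x = x0 then (1:ℝ≥0∞) else 0) * G n h r x
        = if x = x0 then G n h r x else 0 := fun x => by split_ifs <;> simp
    simp only [hterm]
    rw [Finset.sum_ite_eq' Finset.univ x0 (G n h r), if_pos (Finset.mem_univ _)]
  | succ t ih =>
    intro r
    calc ∑ x' : Point n, mVec μ X (t+1) x' * G n h r x'
        = ∑ x' : Point n, ∑ x : Point n,
            (mVec μ X t x * (moveProb (OneMax n) Op.OI x x' * ENNReal.ofReal (1-p)))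
              * G n h r x' := by
          apply Finset.sum_congr rfl
          intro x' _
          rw [mVec_succ hchain t x']
          simp only [trans_OI]
          rw [Finset.sum_mul]
      _ = ∑ x : Point n, ∑ x' : Point n,
            (mVec μ X t x * (moveProb (OneMax n) Op.OI x x' * ENNReal.ofReal (1-p)))
              * G n h r x' := Finset.sum_comm
      _ = ∑ x : Point n, (mVec μ X t x * ENNReal.ofReal (1-p))
            * ∑ x' : Point n, moveProb (OneMax n) Op.OI x x' * G n h r x' := by
          apply Finset.sum_congr rfl
          intro x _
          rw [Finset.mul_sum]
          apply Finset.sum_congr rfl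
          intro x' _
          ring
      _ = ∑ x : Point n, (mVec μ X t x * ENNReal.ofReal (1-p)) * G n h (r+1) x := by
          apply Finset.sum_congr rfl
          intro x _
          rw [sum_moveProb_mul x (G n h r), ← G_succ r x]
      _ = ENNReal.ofReal (1-p) * ∑ x : Point n, mVec μ X t x * G n h (r+1) x := by
          rw [Finset.mul_sum]
          apply Finset.sum_congr rfl
          intro x _
          ring
      _ = ENNReal.ofReal (1-p) * (ENNReal.ofReal (1-p) ^ t * G n h (t+(r+1)) x0) := by
          rw [ih (r+1)]
      _ = ENNReal.ofReal (1-p) ^ (t+1) * G n h ((t+1)+r) x0 := by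
          rw [pow_succ, show t + (r+1) = (t+1)+r from by omega]
          ring


lemma phase_eq {n : ℕ} (hn : 2 ≤ n) {p q : ℝ} (hp0 : 0 < p) (hp1 : p < 1)
    {Ω : Type*} [MeasurableSpace Ω] (μ : Measure Ω) (X : ℕ → Ω → Point n × Op) (x0 : Point n)
    (h : ℕ) (hprob : IsProbabilityMeasure μ) (hchain : IsMMAHH μ X (OneMax n) p q)
    (hinit : μ {ω | X 0 ω = (x0, Op.OI)} = 1) :
    μ {ω | n - ones (X (switchTime X 1 ω) ω).1 ≤ h}
      = ∑' t : ℕ, ENNReal.ofReal p * ENNReal.ofReal (1-p) ^ t * G n h (t+1) x0 := by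
  classical
  set E := {ω | n - ones (X (switchTime X 1 ω) ω).1 ≤ h} with hEdef
  set Γ := {ω | X 0 ω = (x0, Op.OI)} with hΓdef
  have hΓmeas : MeasurableSet Γ := measurableSet_X hchain.1 0 {z | z = (x0, Op.OI)}
  have hΓc : μ Γᶜ = 0 := by
    rw [measure_compl hΓmeas (measure_ne_top μ _), hinit, measure_univ]
    simp
  have hGam : ∀ A : Set Ω, μ (Γ ∩ A) = μ A := by
    intro A
    have h1 : μ A = μ (A ∩ Γ) + μ (A \ Γ) := (measure_inter_add_diff A hΓmeas).symm
    have h2 : μ (A \ Γ) = 0 :=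
      le_antisymm (le_trans (measure_mono (fun ω hω => hω.2)) hΓc.le) zero_le
    rw [Set.inter_comm, h1, h2, add_zero]
  -- computation of the switching time
  have hswitch : ∀ ω, X 0 ω = (x0, Op.OI) → ∀ t', (∀ i < t', (X i ω).2 = Op.OI) →
      (X t' ω).2 ≠ Op.OI → switchTime X 1 ω = t' := by
    intro ω hω t' hOI hne
    have h1 : switchTime X 1 ω
        = sInf {t | switchTime X 0 ω ≤ t ∧ (X t ω).2 ≠ (X (switchTime X 0 ω) ω).2} := rfl
    have h0 : switchTime X 0 ω = 0 := rfl
    rw [h0] at h1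
    have hsnd : (X 0 ω).2 = Op.OI := by rw [hω]
    have hset : {t | 0 ≤ t ∧ (X t ω).2 ≠ (X 0 ω).2} = {t | (X t ω).2 ≠ Op.OI} := by
      ext s
      simp [hsnd]
    rw [h1, hset]
    apply le_antisymm
    · exact Nat.sInf_le hne
    · apply le_csInf ⟨t', hne⟩
      intro m hm
      by_contra hlt
      push_neg at hlt
      exact hm (hOI m hlt)
  -- the decomposition events
  set CD : ℕ → Set Ω := fun t' => Γ ∩ ({ω | ∀ i < t', (X i ω).2 = Op.OI} ∩
      ({ω | (X t' ω).2 ≠ Op.OI} ∩ {ω | n - ones (X t' ω).1 ≤ h})) with hCDdef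
  have hCDsubE : ∀ t', CD t' ⊆ E := by
    rintro t' ω ⟨hΓω, hOI, hne, hD⟩
    have hsw := hswitch ω hΓω t' hOI hne
    show n - ones (X (switchTime X 1 ω) ω).1 ≤ h
    rw [hsw]
    exact hD
  have hCDdisj : Pairwise (Function.onFun Disjoint fun t : ℕ => CD (t+1)) := by
    have key : ∀ a b : ℕ, a < b → Disjoint (CD (a+1)) (CD (b+1)) := by
      intro a b hab
      rw [Set.disjoint_left]
      rintro ω ⟨_, _, hne, _⟩ ⟨_, hOI', _, _⟩
      exact hne (hOI' (a+1) (by omega))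
    intro a b hab
    rcases lt_or_gt_of_ne hab with h1 | h1
    · exact key a b h1
    · exact (key b a h1).symm
  have hCDmeas : ∀ t : ℕ, MeasurableSet (CD (t+1)) := by
    intro t
    refine hΓmeas.inter (MeasurableSet.inter ?_ (MeasurableSet.inter ?_ ?_))
    · have : {ω | ∀ i < t+1, (X i ω).2 = Op.OI}
          = ⋂ i ∈ Set.Iio (t+1), {ω | X i ω ∈ {z : Point n × Op | z.2 = Op.OI}} := by
        ext ω
        simp [Set.mem_iInter]
      rw [this]
      exact MeasurableSet.biInter (Set.to_countable _)
        (fun i _ => measurableSet_X hchain.1 i _)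
    · exact measurableSet_X hchain.1 (t+1) {z : Point n × Op | z.2 ≠ Op.OI}
    · exact measurableSet_X hchain.1 (t+1) {z : Point n × Op | n - ones z.1 ≤ h}
  -- value of each piece
  have hCDval : ∀ t : ℕ, μ (CD (t+1))
      = ENNReal.ofReal p * ENNReal.ofReal (1-p) ^ t * G n h (t+1) x0 := by
    intro t
    set Fh := Finset.univ.filter (fun y : Point n => n - ones y ≤ h) with hFh
    have hunion : CD (t+1) = ⋃ x' ∈ Fh,
        (Γ ∩ {ω | (∀ i ≤ t, (X i ω).2 = Op.OI) ∧ X (t+1) ω = (x', Op.OW)}) := by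
      ext ω
      simp only [hCDdef, Set.mem_iUnion, Set.mem_inter_iff, Set.mem_setOf_eq, hFh,
        Finset.mem_filter, Finset.mem_univ, true_and, exists_prop]
      constructor
      · rintro ⟨hΓω, hOI, hne, hD⟩
        have hOW : (X (t+1) ω).2 = Op.OW := by
          cases hOp : (X (t+1) ω).2
          · exact absurd hOp hne
          · rfl
        exact ⟨(X (t+1) ω).1, hD, hΓω, fun i hi => hOI i (by omega),
          Prod.ext rfl hOW⟩
      · rintro ⟨x', hx', hΓω, hOI, hnext⟩
        refine ⟨hΓω, fun i hi => hOI i (by omega), ?_, ?_⟩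
        · rw [hnext]
          simp
        · rw [hnext]
          exact hx'
    have hdisj : (↑Fh : Set (Point n)).PairwiseDisjoint
        (fun x' => Γ ∩ {ω | (∀ i ≤ t, (X i ω).2 = Op.OI) ∧ X (t+1) ω = (x', Op.OW)}) := by
      intro a _ b _ hab
      rw [Function.onFun, Set.disjoint_left]
      rintro ω ⟨_, _, ha⟩ ⟨_, _, hb⟩
      apply hab
      have : ((a : Point n), Op.OW) = (b, Op.OW) := by rw [← ha, hb]
      exact congrArg Prod.fst this
    have hmeas : ∀ x' ∈ Fh, MeasurableSet
        (Γ ∩ {ω | (∀ i ≤ t, (X i ω).2 = Op.OI) ∧ X (t+1) ω = (x', Op.OW)}) := by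
      intro x' _
      refine hΓmeas.inter ?_
      have : {ω | (∀ i ≤ t, (X i ω).2 = Op.OI) ∧ X (t+1) ω = (x', Op.OW)}
          = (⋂ i ∈ Set.Iic t, {ω | X i ω ∈ {z : Point n × Op | z.2 = Op.OI}})
            ∩ {ω | X (t+1) ω ∈ {z | z = ((x' : Point n), Op.OW)}} := by
        ext ω
        simp [Set.mem_iInter]
      rw [this]
      exact (MeasurableSet.biInter (Set.to_countable _)
        (fun i _ => measurableSet_X hchain.1 i _)).inter
          (measurableSet_X hchain.1 (t+1) _)
    rw [hunion, measure_biUnion_finset hdisj hmeas]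
    have hterm : ∀ x' ∈ Fh,
        μ (Γ ∩ {ω | (∀ i ≤ t, (X i ω).2 = Op.OI) ∧ X (t+1) ω = (x', Op.OW)})
          = ∑ x : Point n, mVec μ X t x * (moveProb (OneMax n) Op.OI x x' * ENNReal.ofReal p) := by
      intro x' _
      rw [hGam, aVec hchain t x']
      simp only [trans_OW]
    rw [Finset.sum_congr rfl hterm]
    rw [Finset.sum_comm]
    have hrow : ∀ x : Point n,
        ∑ x' ∈ Fh, mVec μ X t x * (moveProb (OneMax n) Op.OI x x' * ENNReal.ofReal p)
          = (mVec μ X t x * ENNReal.ofReal p) * G n h 1 x := by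
      intro x
      have h2 : ∑ x' ∈ Fh, moveProb (OneMax n) Op.OI x x'
          = ∑ x' : Point n, moveProb (OneMax n) Op.OI x x' * G n h 0 x' := by
        rw [Finset.sum_filter]
        apply Finset.sum_congr rfl
        intro x' _
        rw [G]
        rw [← zc_eq]
        split_ifs <;> simp
      calc ∑ x' ∈ Fh, mVec μ X t x * (moveProb (OneMax n) Op.OI x x' * ENNReal.ofReal p)
          = (mVec μ X t x * ENNReal.ofReal p) * ∑ x' ∈ Fh, moveProb (OneMax n) Op.OI x x' := by
            rw [Finset.mul_sum]
            apply Finset.sum_congr rfl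
            intro x' _
            ring
        _ = (mVec μ X t x * ENNReal.ofReal p) * G n h 1 x := by
            rw [h2, sum_moveProb_mul x (G n h 0), ← G_succ 0 x]
    rw [Finset.sum_congr rfl (fun x _ => hrow x)]
    calc ∑ x : Point n, (mVec μ X t x * ENNReal.ofReal p) * G n h 1 x
        = ENNReal.ofReal p * ∑ x : Point n, mVec μ X t x * G n h 1 x := by
          rw [Finset.mul_sum]
          apply Finset.sum_congr rfl
          intro x _
          ring
      _ = ENNReal.ofReal p * (ENNReal.ofReal (1-p) ^ t * G n h (t+1) x0) := by
          rw [mVec_G hprob hchain hinit h t 1]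
      _ = ENNReal.ofReal p * ENNReal.ofReal (1-p) ^ t * G n h (t+1) x0 := by ring
  -- the no-switch event is null
  set N := ⋂ s : ℕ, {ω | (X s ω).2 = Op.OI} with hNdef
  have hN : μ N = 0 := by
    have hNle : ∀ t : ℕ, μ N ≤ ENNReal.ofReal (1-p) ^ t := by
      intro t
      have hsub : N ⊆ ⋃ x : Point n, mEvent X t x := by
        intro ω hω
        exact Set.mem_iUnion.mpr ⟨(X t ω).1, ⟨fun i _ => (Set.mem_iInter.mp hω i), rfl⟩⟩
      have hdisjm : Pairwise (Function.onFun Disjoint fun x : Point n => mEvent X t x) := by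
        intro a b hab
        rw [Function.onFun, Set.disjoint_left]
        rintro ω ⟨_, ha⟩ ⟨_, hb⟩
        exact hab (ha ▸ hb ▸ rfl)
      calc μ N ≤ μ (⋃ x : Point n, mEvent X t x) := measure_mono hsub
        _ = ∑' x : Point n, mVec μ X t x :=
            measure_iUnion hdisjm (fun x => measurableSet_mEvent hchain.1 t x)
        _ = ∑ x : Point n, mVec μ X t x := tsum_fintype _
        _ = ∑ x : Point n, mVec μ X t x * G n n 0 x := by
            apply Finset.sum_congr rfl
            intro x _
            rw [show G n n 0 x = 1 from by rw [G]; rw [if_pos (zc_le x)], mul_one]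
        _ = ENNReal.ofReal (1-p) ^ t * G n n (t+0) x0 := mVec_G hprob hchain hinit n t 0
        _ ≤ ENNReal.ofReal (1-p) ^ t := by
            rw [G_full (by omega : n ≠ 0) (t+0) x0, mul_one]
    have hp' : (0:ℝ) ≤ 1 - p := by linarith
    have htend : Filter.Tendsto (fun t : ℕ => ENNReal.ofReal (1-p) ^ t)
        Filter.atTop (nhds 0) := by
      have h1 : Filter.Tendsto (fun t : ℕ => (1-p) ^ t) Filter.atTop (nhds 0) :=
        tendsto_pow_atTop_nhds_zero_of_lt_one hp' (by linarith)
      have h2 := ENNReal.tendsto_ofReal h1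
      rw [ENNReal.ofReal_zero] at h2
      convert h2 using 2 with t
      rw [← ENNReal.ofReal_pow hp']
    exact le_antisymm (ge_of_tendsto' htend hNle) zero_le
  -- assembling
  apply le_antisymm
  · have hEsub : E ⊆ (Γᶜ ∪ N) ∪ ⋃ t : ℕ, CD (t+1) := by
      intro ω hω
      by_cases hΓω : ω ∈ Γ
      · by_cases hall : ∀ s : ℕ, (X s ω).2 = Op.OI
        · exact Or.inl (Or.inr (Set.mem_iInter.mpr hall))
        · push_neg at hall
          have hne : {s : ℕ | (X s ω).2 ≠ Op.OI}.Nonempty := hall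
          have hTmem : (X (sInf {s : ℕ | (X s ω).2 ≠ Op.OI}) ω).2 ≠ Op.OI := Nat.sInf_mem hne
          set T := sInf {s : ℕ | (X s ω).2 ≠ Op.OI} with hTdef
          have hTOI : ∀ i < T, (X i ω).2 = Op.OI := by
            intro i hi
            by_contra hcon
            have := Nat.sInf_le (show i ∈ {s : ℕ | (X s ω).2 ≠ Op.OI} from hcon)
            omega
          have hT0 : T ≠ 0 := by
            intro h0
            apply hTmem
            rw [h0]
            show (X 0 ω).2 = Op.OI
            rw [show X 0 ω = (x0, Op.OI) from hΓω]
          obtain ⟨t, ht⟩ := Nat.exists_eq_succ_of_ne_zero hT0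
          refine Or.inr (Set.mem_iUnion.mpr ⟨t, ?_⟩)
          have hsw := hswitch ω hΓω T hTOI hTmem
          have hD : n - ones (X T ω).1 ≤ h := by
            have := hω
            rw [hEdef] at this
            simpa [hsw] using this
          rw [show t + 1 = T by omega]
          exact ⟨hΓω, hTOI, hTmem, hD⟩
      · exact Or.inl (Or.inl hΓω)
    calc μ E ≤ μ ((Γᶜ ∪ N) ∪ ⋃ t : ℕ, CD (t+1)) := measure_mono hEsub
      _ ≤ μ (Γᶜ ∪ N) + μ (⋃ t : ℕ, CD (t+1)) := measure_union_le _ _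
      _ ≤ (μ Γᶜ + μ N) + μ (⋃ t : ℕ, CD (t+1)) :=
          add_le_add_left (measure_union_le _ _) _
      _ = μ (⋃ t : ℕ, CD (t+1)) := by rw [hΓc, hN, add_zero, zero_add]
      _ ≤ ∑' t : ℕ, μ (CD (t+1)) := measure_iUnion_le _
      _ = ∑' t : ℕ, ENNReal.ofReal p * ENNReal.ofReal (1-p) ^ t * G n h (t+1) x0 :=
          tsum_congr hCDval
  · calc ∑' t : ℕ, ENNReal.ofReal p * ENNReal.ofReal (1-p) ^ t * G n h (t+1) x0
        = ∑' t : ℕ, μ (CD (t+1)) := tsum_congr (fun t => (hCDval t).symm)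
      _ = μ (⋃ t : ℕ, CD (t+1)) := (measure_iUnion hCDdisj hCDmeas).symm
      _ ≤ μ E := measure_mono (Set.iUnion_subset fun t => hCDsubE (t+1))

/-- Monotonicity and minimality of the one-OI-phase success probabilities `p_k^h` on OneMax
(Lemma 3 of the paper): if `k ≤ k'` and `h' ≤ h`, then `p_{k'}^{h'} ≤ p_k^h`; in particular
`p_k^h` is non-increasing in `k`, non-decreasing in `h`, and always at least `p_n^0`. -/
theorem oi_phase_prob_monotone (n : ℕ) (hn : 2 ≤ n) (p q : ℝ)
    (hp0 : 0 < p) (hp1 : p < 1) (hq0 : 0 < q) (hq1 : q < 1)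
    (k h k' h' : ℕ) (hk : k ≤ n) (hh : h ≤ n) (hk' : k' ≤ n) (hh' : h' ≤ n)
    (hkk : k ≤ k') (hhh : h' ≤ h)
    (x0 x0' : Point n) (hx0 : n - ones x0 = k) (hx0' : n - ones x0' = k')
    (Ω : Type) [MeasurableSpace Ω] (μ : Measure Ω) (X : ℕ → Ω → Point n × Op)
    (Ω' : Type) [MeasurableSpace Ω'] (μ' : Measure Ω') (X' : ℕ → Ω' → Point n × Op)
    (hprob : IsProbabilityMeasure μ) (hchain : IsMMAHH μ X (OneMax n) p q)
    (hinit : μ {ω | X 0 ω = (x0, Op.OI)} = 1)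
    (hprob' : IsProbabilityMeasure μ') (hchain' : IsMMAHH μ' X' (OneMax n) p q)
    (hinit' : μ' {ω | X' 0 ω = (x0', Op.OI)} = 1) :
    μ' {ω | n - ones (X' (switchTime X' 1 ω) ω).1 ≤ h'} ≤
      μ {ω | n - ones (X (switchTime X 1 ω) ω).1 ≤ h} := by
  have hzc : zc x0 ≤ zc x0' := by
    have e1 : zc x0 = k := by rw [← zc_eq, hx0]
    have e2 : zc x0' = k' := by rw [← zc_eq, hx0']
    omega
  rw [phase_eq hn hp0 hp1 μ' X' x0' h' hprob' hchain' hinit',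
    phase_eq hn hp0 hp1 μ X x0 h hprob hchain hinit]
  apply ENNReal.tsum_le_tsum
  intro t
  exact mul_le_mul_right (G_mono (t+1) h h' x0 x0' hhh hzc) _
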